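/- Let P = {p₁, …, p_n} be a finite nonempty set of points in ℝ^d, let α > 0, and let p, q ≥ 1 be integers. Call an ordered pair of indices (i, i') exceptional if d_i = d_{i'} and p_{i1} − p_{i'1} = t·α for some integer t with 0 ≤ t < p + q. Call a distance between two endpoints of E(r) exceptional if it equals |a_i(r) − a_{i'}(r)| for an exceptional pair (i, i') or |b_i(r) − b_{i'}(r)| for an exceptional pair (i, i'); otherwise call it non-exceptional. Suppose r is a constrained-feasible radius and that every non-exceptional distance between two endpoints of E(r) differs from t·α for every integer t with 0 ≤ t ≤ p + q − 1. Then there exists r' < r that is constrained-feasible. -/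

import Mathlib

/-- A point of `ℝ^d` lies on the line `ℓ` (the x-axis) iff all coordinates other than the
first vanish. -/
def OnAxis {d : ℕ} (x : EuclideanSpace ℝ (Fin d)) : Prop :=
  ∀ j : Fin d, (j : ℕ) ≠ 0 → x j = 0

/-- The distance `d_i = sqrt(p_{i2}² + … + p_{id}²)` of a point of `ℝ^d` from the x-axis. -/
noncomputable def distToAxis {d : ℕ} (p : EuclideanSpace ℝ (Fin d)) : ℝ :=
  Real.sqrt (∑ j ∈ Finset.univ.filter (fun j : Fin d => (j : ℕ) ≠ 0), (p j) ^ 2)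

/-- The left endpoint `aᵢ(r) = p_{i1} − sqrt(r² − dᵢ²)`. -/
noncomputable def aEnd {d : ℕ} (hd : 0 < d) (p : EuclideanSpace ℝ (Fin d)) (r : ℝ) : ℝ :=
  p ⟨0, hd⟩ - Real.sqrt (r ^ 2 - distToAxis p ^ 2)

/-- The right endpoint `bᵢ(r) = p_{i1} + sqrt(r² − dᵢ²)`. -/
noncomputable def bEnd {d : ℕ} (hd : 0 < d) (p : EuclideanSpace ℝ (Fin d)) (r : ℝ) : ℝ :=
  p ⟨0, hd⟩ + Real.sqrt (r ^ 2 - distToAxis p ^ 2)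

/-- `E(r)`: the set of all endpoints `aᵢ(r)`, `bᵢ(r)` over points `pᵢ` with `dᵢ ≤ r`. -/
def Endpoints {d n : ℕ} (hd : 0 < d) (pts : Fin n → EuclideanSpace ℝ (Fin d))
    (r : ℝ) : Set ℝ :=
  {e | ∃ i : Fin n, distToAxis (pts i) ≤ r ∧
    (e = aEnd hd (pts i) r ∨ e = bEnd hd (pts i) r)}

/-- A feasible solution of the `(p ∧ q, α)` problem on the point set `{pts i}` with
covering radius `r`, all of whose centers lie on the x-axis. -/
def ConstrainedFeasible {d n : ℕ} (pts : Fin n → EuclideanSpace ℝ (Fin d))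
    (α : ℝ) (p q : ℕ) (r : ℝ) : Prop :=
  ∃ (c : Fin p → EuclideanSpace ℝ (Fin d)) (e : Fin q → EuclideanSpace ℝ (Fin d)),
    (∀ i, OnAxis (c i)) ∧ (∀ j, OnAxis (e j)) ∧
    (∀ k : Fin n, ∃ i, dist (pts k) (c i) ≤ r) ∧
    (∀ k : Fin n, ∃ j, dist (pts k) (e j) ≤ r) ∧
    (∀ i j, α ≤ dist (c i) (e j))

/-- A pair of indices `(i, i')` is exceptional if `dᵢ = d_{i'}` and
`p_{i1} − p_{i'1} = t·α` for some integer `0 ≤ t < p + q`. -/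
def ExcPair {d n : ℕ} (hd : 0 < d) (pts : Fin n → EuclideanSpace ℝ (Fin d))
    (α : ℝ) (p q : ℕ) (i i' : Fin n) : Prop :=
  distToAxis (pts i) = distToAxis (pts i') ∧
  ∃ t : ℕ, t < p + q ∧ pts i ⟨0, hd⟩ - pts i' ⟨0, hd⟩ = t * α


lemma distToAxis_nonneg {d : ℕ} (p : EuclideanSpace ℝ (Fin d)) : 0 ≤ distToAxis p :=
  Real.sqrt_nonneg _

lemma distToAxis_sq {d : ℕ} (p : EuclideanSpace ℝ (Fin d)) :
    distToAxis p ^ 2 = ∑ j ∈ Finset.univ.filter (fun j : Fin d => (j : ℕ) ≠ 0), (p j) ^ 2 :=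
  Real.sq_sqrt (Finset.sum_nonneg fun _ _ => sq_nonneg _)

lemma dist_sq_axis {d : ℕ} (hd : 0 < d) (pt x : EuclideanSpace ℝ (Fin d)) (hx : OnAxis x) :
    dist pt x ^ 2 = (pt ⟨0, hd⟩ - x ⟨0, hd⟩) ^ 2 + distToAxis pt ^ 2 := by
  rw [EuclideanSpace.dist_eq, Real.sq_sqrt (Finset.sum_nonneg fun _ _ => sq_nonneg _),
    distToAxis_sq]
  simp only [Real.dist_eq, sq_abs]
  rw [← Finset.sum_filter_add_sum_filter_not Finset.univ (fun j : Fin d => (j : ℕ) ≠ 0)]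
  have h1 : ∑ j ∈ Finset.univ.filter (fun j : Fin d => (j : ℕ) ≠ 0), (pt j - x j) ^ 2
      = ∑ j ∈ Finset.univ.filter (fun j : Fin d => (j : ℕ) ≠ 0), (pt j) ^ 2 := by
    apply Finset.sum_congr rfl
    intro j hj
    rw [hx j (Finset.mem_filter.mp hj).2, sub_zero]
  have h2 : Finset.univ.filter (fun j : Fin d => ¬ (j : ℕ) ≠ 0) = {⟨0, hd⟩} := by
    ext j
    simp only [Finset.mem_filter, Finset.mem_univ, true_and, Finset.mem_singleton, not_not]
    constructor
    · intro h; exact Fin.ext h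
    · intro h; rw [h]
  rw [h1, h2, Finset.sum_singleton, add_comm]

lemma dist_axis_axis {d : ℕ} (hd : 0 < d) (x y : EuclideanSpace ℝ (Fin d))
    (hx : OnAxis x) (hy : OnAxis y) : dist x y = |x ⟨0, hd⟩ - y ⟨0, hd⟩| := by
  have h0 : distToAxis x = 0 := by
    rw [distToAxis, Real.sqrt_eq_zero']
    apply le_of_eq
    apply Finset.sum_eq_zero
    intro j hj
    rw [hx j (Finset.mem_filter.mp hj).2]; ring
  have := dist_sq_axis hd x y hy
  rw [h0] at this
  have h2 : dist x y = Real.sqrt (dist x y ^ 2) := (Real.sqrt_sq dist_nonneg).symm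
  rw [h2, this]
  simp [Real.sqrt_sq_eq_abs]

noncomputable def mkAxis {d : ℕ} (hd : 0 < d) (v : ℝ) : EuclideanSpace ℝ (Fin d) :=
  WithLp.toLp 2 (fun j => if j = ⟨0, hd⟩ then v else 0)

lemma mkAxis_onAxis {d : ℕ} (hd : 0 < d) (v : ℝ) : OnAxis (mkAxis hd v) := by
  intro j hj
  rw [mkAxis, PiLp.toLp_apply, if_neg]
  intro h; apply hj; rw [h]

lemma mkAxis_zero {d : ℕ} (hd : 0 < d) (v : ℝ) : mkAxis hd v ⟨0, hd⟩ = v := by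
  rw [mkAxis, PiLp.toLp_apply, if_pos rfl]


lemma oneD (p q n : ℕ) (hp : 1 ≤ p) (hq : 1 ≤ q) (hn : 0 < n)
    (α : ℝ) (hα : 0 ≤ α)
    (la ub : Fin n → ℝ) (hlu : ∀ k, la k < ub k)
    (z : Fin p ⊕ Fin q → ℝ)
    (R : Fin n → Fin p) (B : Fin n → Fin q)
    (hcovR : ∀ k, la k ≤ z (.inl (R k)) ∧ z (.inl (R k)) ≤ ub k)
    (hcovB : ∀ k, la k ≤ z (.inr (B k)) ∧ z (.inr (B k)) ≤ ub k)
    (hsep : ∀ i j, α ≤ |z (.inl i) - z (.inr j)|)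
    (hkey : ∀ k k' : Fin n, ∀ s : ℤ, s.natAbs ≤ p + q - 1 → la k - ub k' ≠ s * α) :
    ∃ z' : Fin p ⊕ Fin q → ℝ,
      (∀ k, la k < z' (.inl (R k)) ∧ z' (.inl (R k)) < ub k) ∧
      (∀ k, la k < z' (.inr (B k)) ∧ z' (.inr (B k)) < ub k) ∧
      (∀ i j, α ≤ |z' (.inl i) - z' (.inr j)|) := by
  classical
  let G : SimpleGraph (Fin p ⊕ Fin q) :=
    { Adj := fun u v => u.isLeft ≠ v.isLeft ∧ |z u - z v| = α
      symm := by
        refine ⟨fun u v h => ?_⟩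
        exact ⟨h.1.symm, by rw [abs_sub_comm]; exact h.2⟩
      loopless := by
        refine ⟨fun u h => ?_⟩
        exact h.1 rfl }
  -- walk difference lemma
  have walkdiff : ∀ (u v : Fin p ⊕ Fin q) (w : G.Walk u v),
      ∃ s : ℤ, s.natAbs ≤ w.length ∧ z u - z v = s * α := by
    intro u v w
    induction w with
    | nil => exact ⟨0, by simp⟩
    | @cons u u' v h w ih =>
      obtain ⟨s, hs, hz⟩ := ih
      have habs := h.2
      rw [abs_eq hα] at habs
      have hlen : (SimpleGraph.Walk.cons h w).length = w.length + 1 :=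
        SimpleGraph.Walk.length_cons h w
      rcases habs with h' | h'
      · refine ⟨s + 1, ?_, ?_⟩
        · rw [hlen]
          calc (s + 1).natAbs ≤ s.natAbs + (1 : ℤ).natAbs := Int.natAbs_add_le s 1
            _ ≤ w.length + 1 := by simpa using hs
        · have : z u - z v = (z u - z u') + (z u' - z v) := by ring
          rw [this, h', hz]; push_cast; ring
      · refine ⟨s - 1, ?_, ?_⟩
        · rw [hlen]
          calc (s - 1).natAbs ≤ s.natAbs + (1 : ℤ).natAbs := Int.natAbs_sub_le s 1
            _ ≤ w.length + 1 := by simpa using hs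
        · have : z u - z v = (z u - z u') + (z u' - z v) := by ring
          rw [this, h', hz]; push_cast; ring
  -- core: no component touches both a left endpoint and a right endpoint
  have Hcore : ∀ u v : Fin p ⊕ Fin q, G.Reachable u v → ∀ k k' : Fin n,
      z u = la k → z v = ub k' → False := by
    intro u v hr k k' hu hv
    obtain ⟨w⟩ := hr
    obtain ⟨s, hs, hz⟩ := walkdiff u v w.bypass
    have hcard : w.bypass.length ≤ p + q - 1 := by
      have  := w.bypass_isPath.length_lt
      have h2 : Fintype.card (Fin p ⊕ Fin q) = p + q := by
        simp [Fintype.card_sum]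
      omega
    exact hkey k k' s (le_trans hs hcard) (by rw [← hu, ← hv]; exact hz)
  -- tightness predicates
  let PA : (Fin p ⊕ Fin q) → Prop := fun u => ∃ v k, G.Reachable u v ∧ z v = la k
  let PB : (Fin p ⊕ Fin q) → Prop := fun u => ∃ v k, G.Reachable u v ∧ z v = ub k
  have hnotboth : ∀ u, PA u → PB u → False := by
    intro u ⟨v, k, hrv, hv⟩ ⟨w, k', hrw, hw⟩
    exact Hcore v w (hrv.symm.trans hrw) k k' hv hw
  let σ : (Fin p ⊕ Fin q) → ℝ := fun u => if PA u then 1 else if PB u then -1 else 0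
  have hσA : ∀ u k, z u = la k → σ u = 1 := by
    intro u k h
    have : PA u := ⟨u, k, SimpleGraph.Reachable.refl u, h⟩
    simp only [σ, if_pos this]
  have hσB : ∀ u k, z u = ub k → σ u = -1 := by
    intro u k h
    have hPB : PB u := ⟨u, k, SimpleGraph.Reachable.refl u, h⟩
    have hPA : ¬ PA u := fun hPA => hnotboth u hPA hPB
    simp only [σ, if_neg hPA, if_pos hPB]
  have hσabs : ∀ u, |σ u| ≤ 1 := by
    intro u
    simp only [σ]
    split
    · simp
    · split <;> simp
  have hσreach : ∀ u v, G.Reachable u v → σ u = σ v := by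
    intro u v hr
    have hA : PA u ↔ PA v := by
      constructor
      · rintro ⟨w, k, hrw, hw⟩; exact ⟨w, k, hr.symm.trans hrw, hw⟩
      · rintro ⟨w, k, hrw, hw⟩; exact ⟨w, k, hr.trans hrw, hw⟩
    have hB : PB u ↔ PB v := by
      constructor
      · rintro ⟨w, k, hrw, hw⟩; exact ⟨w, k, hr.symm.trans hrw, hw⟩
      · rintro ⟨w, k, hrw, hw⟩; exact ⟨w, k, hr.trans hrw, hw⟩
    simp only [σ]
    rw [if_congr hA rfl rfl, if_congr hB rfl rfl]
  -- bounds
  let bndC : (Fin p ⊕ Fin q) → Fin n → ℝ := fun u k =>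
    if z u = la k ∨ z u = ub k then ub k - la k else min (z u - la k) (ub k - z u)
  have hbndC : ∀ u k, la k ≤ z u → z u ≤ ub k → 0 < bndC u k := by
    intro u k h1 h2
    simp only [bndC]
    split
    · linarith [hlu k]
    · next h =>
      push_neg at h
      have := lt_of_le_of_ne h1 (Ne.symm h.1)
      have := lt_of_le_of_ne h2 h.2
      simp only [lt_min_iff]
      constructor <;> linarith
  let bnd2 : Fin p × Fin q → ℝ := fun ij =>
    if G.Reachable (.inl ij.1) (.inr ij.2) then 1
    else |z (.inl ij.1) - z (.inr ij.2)| - α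
  have hbnd2 : ∀ ij, 0 < bnd2 ij := by
    intro ij
    simp only [bnd2]
    split
    · norm_num
    · next h =>
      have hnadj : ¬ G.Adj (.inl ij.1) (.inr ij.2) := fun hadj => h hadj.reachable
      have hne : |z (.inl ij.1) - z (.inr ij.2)| ≠ α := by
        intro he
        exact hnadj ⟨by simp, he⟩
      have := hsep ij.1 ij.2
      cases lt_or_eq_of_le this with
      | inl h' => linarith
      | inr h' => exact absurd h'.symm hne
  -- choose η
  have hne1 : (Finset.univ : Finset (Fin n)).Nonempty := ⟨⟨0, hn⟩, Finset.mem_univ _⟩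
  have hne2 : (Finset.univ : Finset (Fin p × Fin q)).Nonempty :=
    ⟨(⟨0, hp⟩, ⟨0, hq⟩), Finset.mem_univ _⟩
  let M : ℝ := min
    (Finset.univ.inf' hne1 (fun k : Fin n => min (bndC (.inl (R k)) k) (bndC (.inr (B k)) k)))
    (Finset.univ.inf' hne2 bnd2)
  have hM : 0 < M := by
    apply lt_min
    · rw [Finset.lt_inf'_iff]
      intro k _
      exact lt_min (hbndC _ k (hcovR k).1 (hcovR k).2) (hbndC _ k (hcovB k).1 (hcovB k).2)
    · rw [Finset.lt_inf'_iff]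
      intro ij _
      exact hbnd2 ij
  let η : ℝ := M / 2
  have hη : 0 < η := by positivity
  have hηk : ∀ k, 2 * η ≤ bndC (.inl (R k)) k ∧ 2 * η ≤ bndC (.inr (B k)) k := by
    intro k
    have h1 : M ≤ min (bndC (.inl (R k)) k) (bndC (.inr (B k)) k) :=
      le_trans (min_le_left _ _) (Finset.inf'_le _ (Finset.mem_univ k))
    have h2 : 2 * η = M := by simp only [η]; ring
    rw [le_min_iff] at h1
    constructor <;> linarith [h1.1, h1.2]
  have hηij : ∀ i j, 2 * η ≤ bnd2 (i, j) := by
    intro i j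
    have h1 : M ≤ bnd2 (i, j) :=
      le_trans (min_le_right _ _) (Finset.inf'_le _ (Finset.mem_univ (i, j)))
    have h2 : 2 * η = M := by simp only [η]; ring
    linarith
  -- coverage helper
  have cov : ∀ (u : Fin p ⊕ Fin q) (k : Fin n), la k ≤ z u → z u ≤ ub k →
      2 * η ≤ bndC u k → la k < z u + σ u * η ∧ z u + σ u * η < ub k := by
    intro u k h1 h2 hb
    by_cases hA : z u = la k
    · have hσ : σ u = 1 := hσA u k hA
      have hbnd : bndC u k = ub k - la k := if_pos (Or.inl hA)
      rw [hbnd] at hb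
      rw [hσ, hA]
      constructor <;> linarith
    · by_cases hB : z u = ub k
      · have hσ : σ u = -1 := hσB u k hB
        have hbnd : bndC u k = ub k - la k := if_pos (Or.inr hB)
        rw [hbnd] at hb
        rw [hσ, hB]
        constructor <;> linarith
      · have hbnd : bndC u k = min (z u - la k) (ub k - z u) := if_neg (by tauto)
        rw [hbnd, le_min_iff] at hb
        have habs := hσabs u
        rw [abs_le] at habs
        have h3 : σ u * η ≤ η := by nlinarith [habs.2]
        have h4 : -η ≤ σ u * η := by nlinarith [habs.1]
        constructor <;> linarith [hb.1, hb.2]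
  -- the perturbed solution
  refine ⟨fun u => z u + σ u * η, ?_, ?_, ?_⟩
  · intro k
    exact cov _ k (hcovR k).1 (hcovR k).2 (hηk k).1
  · intro k
    exact cov _ k (hcovB k).1 (hcovB k).2 (hηk k).2
  · intro i j
    by_cases hr : G.Reachable (.inl i) (.inr j)
    · have hσeq := hσreach _ _ hr
      have heq : (z (.inl i) + σ (.inl i) * η) - (z (.inr j) + σ (.inr j) * η)
          = z (.inl i) - z (.inr j) := by rw [hσeq]; ring
      rw [heq]
      exact hsep i j
    · have hb := hηij i j
      have hbnd : bnd2 (i, j) = |z (.inl i) - z (.inr j)| - α := if_neg hr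
      rw [hbnd] at hb
      set A := z (.inl i) - z (.inr j) with hA
      set c := σ (.inl i) * η - σ (.inr j) * η with hc
      have h1 : |c| ≤ 2 * η := by
        have e1 : |σ (.inl i) * η| ≤ η := by
          rw [abs_mul, abs_of_nonneg hη.le]
          nlinarith [hσabs (Sum.inl i : Fin p ⊕ Fin q)]
        have e2 : |σ (.inr j) * η| ≤ η := by
          rw [abs_mul, abs_of_nonneg hη.le]
          nlinarith [hσabs (Sum.inr j : Fin p ⊕ Fin q)]
        calc |c| ≤ |σ (.inl i) * η| + |σ (.inr j) * η| := abs_sub _ _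
          _ ≤ 2 * η := by linarith
      have h2 : (z (.inl i) + σ (.inl i) * η) - (z (.inr j) + σ (.inr j) * η) = A + c := by
        rw [hA, hc]; ring
      have h3 : |A| ≤ |A + c| + |c| := by
        have e : A = (A + c) + (-c) := by ring
        calc |A| = |(A + c) + (-c)| := by rw [← e]
          _ ≤ |A + c| + |-c| := abs_add_le _ _
          _ = |A + c| + |c| := by rw [abs_neg]
      rw [h2]
      linarith

theorem stmt10 (d n : ℕ) (hd : 0 < d) (hn : 0 < n)
    (pts : Fin n → EuclideanSpace ℝ (Fin d))
    (α : ℝ) (hα : 0 < α) (p q : ℕ) (hp : 1 ≤ p) (hq : 1 ≤ q)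
    (r : ℝ) (hfeas : ConstrainedFeasible pts α p q r)
    (hAA : ∀ i i' : Fin n, distToAxis (pts i) ≤ r → distToAxis (pts i') ≤ r →
      ¬ ExcPair hd pts α p q i i' → ¬ ExcPair hd pts α p q i' i →
      ∀ t : ℕ, t ≤ p + q - 1 →
        |aEnd hd (pts i) r - aEnd hd (pts i') r| ≠ t * α ∧
        |bEnd hd (pts i) r - bEnd hd (pts i') r| ≠ t * α)
    (hAB : ∀ i i' : Fin n, distToAxis (pts i) ≤ r → distToAxis (pts i') ≤ r →
      ∀ t : ℕ, t ≤ p + q - 1 → |aEnd hd (pts i) r - bEnd hd (pts i') r| ≠ t * α) :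
    ∃ r' < r, ConstrainedFeasible pts α p q r' := by
  classical
  obtain ⟨c, e, hcax, heax, hcovR0, hcovB0, hsep0⟩ := hfeas
  obtain ⟨i0, hi0⟩ := hcovR0 ⟨0, hn⟩
  have hr0 : 0 ≤ r := le_trans dist_nonneg hi0
  set D : Fin n → ℝ := fun k => distToAxis (pts k) with hD_def
  set m : Fin n → ℝ := fun k => pts k ⟨0, hd⟩ with hm_def
  -- coverage characterization
  have hchar : ∀ (k : Fin n) (x : EuclideanSpace ℝ (Fin d)), OnAxis x →
      dist (pts k) x ≤ r →
      D k ≤ r ∧ aEnd hd (pts k) r ≤ x ⟨0, hd⟩ ∧ x ⟨0, hd⟩ ≤ bEnd hd (pts k) r := by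
    intro k x hax hdist
    have hsq : dist (pts k) x ^ 2 ≤ r ^ 2 := pow_le_pow_left₀ dist_nonneg hdist 2
    rw [dist_sq_axis hd (pts k) x hax] at hsq
    have hDk : D k ≤ r := by
      have h1 : D k ^ 2 ≤ r ^ 2 := by nlinarith [sq_nonneg (m k - x ⟨0, hd⟩)]
      have h2 := Real.sqrt_le_sqrt h1
      rwa [Real.sqrt_sq (distToAxis_nonneg _), Real.sqrt_sq hr0] at h2
    refine ⟨hDk, ?_, ?_⟩
    · have h1 : (m k - x ⟨0, hd⟩) ^ 2 ≤ r ^ 2 - D k ^ 2 := by linarith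
      have h2 := Real.abs_le_sqrt h1
      rw [abs_le] at h2
      rw [aEnd]
      have := h2.2
      simp only [hm_def] at this ⊢
      linarith
    · have h1 : (m k - x ⟨0, hd⟩) ^ 2 ≤ r ^ 2 - D k ^ 2 := by linarith
      have h2 := Real.abs_le_sqrt h1
      rw [abs_le] at h2
      rw [bEnd]
      have := h2.1
      simp only [hm_def] at this ⊢
      linarith
  -- assignments
  let R : Fin n → Fin p := fun k => Classical.choose (hcovR0 k)
  let B : Fin n → Fin q := fun k => Classical.choose (hcovB0 k)
  have hR : ∀ k, dist (pts k) (c (R k)) ≤ r := fun k => Classical.choose_spec (hcovR0 k)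
  have hB : ∀ k, dist (pts k) (e (B k)) ≤ r := fun k => Classical.choose_spec (hcovB0 k)
  have hDr : ∀ k, D k ≤ r := fun k => (hchar k (c (R k)) (hcax _) (hR k)).1
  -- endpoints
  set la : Fin n → ℝ := fun k => aEnd hd (pts k) r with hla_def
  set ub : Fin n → ℝ := fun k => bEnd hd (pts k) r with hub_def
  have hlu : ∀ k, la k < ub k := by
    intro k
    have h0 := hAB k k (hDr k) (hDr k) 0 (Nat.zero_le _)
    have hne : la k ≠ ub k := by
      intro h
      apply h0
      rw [hla_def, hub_def] at h
      simp [h, sub_eq_zero.mpr h]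
    have hle : la k ≤ ub k := by
      rw [hla_def, hub_def]
      simp only [aEnd, bEnd]
      have := Real.sqrt_nonneg (r ^ 2 - distToAxis (pts k) ^ 2)
      linarith
    exact lt_of_le_of_ne hle hne
  -- 1D positions
  set z : Fin p ⊕ Fin q → ℝ :=
    Sum.elim (fun i => c i ⟨0, hd⟩) (fun j => e j ⟨0, hd⟩) with hz_def
  have hcovR1 : ∀ k, la k ≤ z (.inl (R k)) ∧ z (.inl (R k)) ≤ ub k := by
    intro k
    have := hchar k (c (R k)) (hcax _) (hR k)
    exact ⟨this.2.1, this.2.2⟩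
  have hcovB1 : ∀ k, la k ≤ z (.inr (B k)) ∧ z (.inr (B k)) ≤ ub k := by
    intro k
    have := hchar k (e (B k)) (heax _) (hB k)
    exact ⟨this.2.1, this.2.2⟩
  have hsep1 : ∀ i j, α ≤ |z (.inl i) - z (.inr j)| := by
    intro i j
    have := hsep0 i j
    rwa [dist_axis_axis hd (c i) (e j) (hcax i) (heax j)] at this
  have hkey : ∀ k k' : Fin n, ∀ s : ℤ, s.natAbs ≤ p + q - 1 → la k - ub k' ≠ s * α := by
    intro k k' s hs heq
    apply hAB k k' (hDr k) (hDr k') s.natAbs hs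
    rw [hla_def, hub_def] at heq
    rw [heq, abs_mul, abs_of_pos hα, Nat.cast_natAbs, Int.cast_abs]
  obtain ⟨z', hz'R, hz'B, hz'sep⟩ :=
    oneD p q n hp hq hn α hα.le la ub hlu z R B hcovR1 hcovB1 hsep1 hkey
  -- choose the smaller radius
  have hne1 : (Finset.univ : Finset (Fin n)).Nonempty := ⟨⟨0, hn⟩, Finset.mem_univ _⟩
  set M : ℝ := Finset.univ.sup' hne1 (fun k =>
    max ((m k - z' (.inl (R k))) ^ 2 + D k ^ 2)
        ((m k - z' (.inr (B k))) ^ 2 + D k ^ 2)) with hM_def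
  have hsq_bound : ∀ k (v : ℝ), la k < v → v < ub k → (m k - v) ^ 2 + D k ^ 2 < r ^ 2 := by
    intro k v h1 h2
    rw [hla_def] at h1
    rw [hub_def] at h2
    simp only [aEnd, bEnd] at h1 h2
    have hs0 : 0 ≤ r ^ 2 - D k ^ 2 := by nlinarith [hDr k, distToAxis_nonneg (pts k), hr0]
    have h3 : (m k - v) ^ 2 < Real.sqrt (r ^ 2 - distToAxis (pts k) ^ 2) ^ 2 := by
      apply sq_lt_sq'
      · simp only [hm_def]; linarith
      · simp only [hm_def]; linarith
    rw [Real.sq_sqrt] at h3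
    · simp only [hD_def] at *; linarith
    · simpa [hD_def] using hs0
  have hMr : M < r ^ 2 := by
    rw [hM_def, Finset.sup'_lt_iff]
    intro k _
    apply max_lt
    · exact hsq_bound k _ (hz'R k).1 (hz'R k).2
    · exact hsq_bound k _ (hz'B k).1 (hz'B k).2
  have hM0 : 0 ≤ M := by
    refine le_trans ?_ (Finset.le_sup' _ (Finset.mem_univ (⟨0, hn⟩ : Fin n)))
    refine le_trans ?_ (le_max_left _ _)
    positivity
  set r' : ℝ := Real.sqrt ((M + r ^ 2) / 2) with hr'_def
  have hr'2 : r' ^ 2 = (M + r ^ 2) / 2 := Real.sq_sqrt (by positivity)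
  have hr'r : r' < r := by
    rw [hr'_def]
    calc Real.sqrt ((M + r ^ 2) / 2) < Real.sqrt (r ^ 2) :=
          Real.sqrt_lt_sqrt (by positivity) (by linarith)
      _ = r := Real.sqrt_sq hr0
  have hr'0 : 0 ≤ r' := Real.sqrt_nonneg _
  refine ⟨r', hr'r, ?_⟩
  refine ⟨fun i => mkAxis hd (z' (.inl i)), fun j => mkAxis hd (z' (.inr j)),
    fun i => mkAxis_onAxis hd _, fun j => mkAxis_onAxis hd _, ?_, ?_, ?_⟩
  · intro k
    refine ⟨R k, ?_⟩
    have hsq : dist (pts k) (mkAxis hd (z' (.inl (R k)))) ^ 2 ≤ r' ^ 2 := by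
      rw [dist_sq_axis hd _ _ (mkAxis_onAxis hd _), mkAxis_zero, hr'2]
      have h1 : (m k - z' (.inl (R k))) ^ 2 + D k ^ 2 ≤ M := by
        have h2 := Finset.le_sup' (fun k => max ((m k - z' (.inl (R k))) ^ 2 + D k ^ 2)
          ((m k - z' (.inr (B k))) ^ 2 + D k ^ 2)) (Finset.mem_univ k)
        exact le_trans (le_max_left _ _) h2
      simp only [hm_def, hD_def] at h1 ⊢
      linarith
    have := Real.sqrt_le_sqrt hsq
    rwa [Real.sqrt_sq dist_nonneg, Real.sqrt_sq hr'0] at this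
  · intro k
    refine ⟨B k, ?_⟩
    have hsq : dist (pts k) (mkAxis hd (z' (.inr (B k)))) ^ 2 ≤ r' ^ 2 := by
      rw [dist_sq_axis hd _ _ (mkAxis_onAxis hd _), mkAxis_zero, hr'2]
      have h1 : (m k - z' (.inr (B k))) ^ 2 + D k ^ 2 ≤ M := by
        have h2 := Finset.le_sup' (fun k => max ((m k - z' (.inl (R k))) ^ 2 + D k ^ 2)
          ((m k - z' (.inr (B k))) ^ 2 + D k ^ 2)) (Finset.mem_univ k)
        exact le_trans (le_max_right _ _) h2
      simp only [hm_def, hD_def] at h1 ⊢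
      linarith
    have := Real.sqrt_le_sqrt hsq
    rwa [Real.sqrt_sq dist_nonneg, Real.sqrt_sq hr'0] at this
  · intro i j
    rw [dist_axis_axis hd _ _ (mkAxis_onAxis hd _) (mkAxis_onAxis hd _),
      mkAxis_zero, mkAxis_zero]
    exact hz'sep i j
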